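/- Let c ∈ ℂ be nonzero and let f : ℂ → ℂ be meromorphic on all of ℂ and not constant (there exist points x, y at which f is analytic with f(x) ≠ f(y)). Suppose that f(x)·f(y) = f(x+y)·(f(x) + f(y) + c) for all x, y ∈ ℂ such that f is analytic at x, at y, and at x+y. Then there exists a nonzero λ ∈ ℂ such that f(z) = c/(exp(λz) − 1) for every z at which f is analytic and exp(λz) ≠ 1. (Writing b = e^λ, this is the functional equation determining the trigonometric solutions g(u,v) = (q − q⁻¹)/(b^{u−v} − 1), with c = q − q⁻¹, of the Yang-Baxterization of a Hecke symmetry.) -/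

import Mathlib

open Filter Topology Set

private lemma aux_compl_nonempty {S : Set ℂ} (hS : S.Countable) : Sᶜ.Nonempty :=
  (hS.dense_compl ℂ).nonempty

private lemma aux_preconn {S : Set ℂ} (hS : S.Countable) : IsPreconnected Sᶜ :=
  (hS.isConnected_compl_of_one_lt_rank
    (by rw [Complex.rank_real_complex]; norm_num)).isPreconnected

private lemma aux_countable {f : ℂ → ℂ} (hf : MeromorphicOn f Set.univ) :
    {z : ℂ | AnalyticAt ℂ f z}ᶜ.Countable := by
  have h1 : ∀ x : ℂ, Disjoint (𝓝[≠] x) (𝓟 {z : ℂ | AnalyticAt ℂ f z}ᶜ) := by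
    intro x
    rw [disjoint_principal_right]
    filter_upwards [(hf x (Set.mem_univ x)).eventually_analyticAt] with y hy
    simp [hy]
  obtain ⟨-, h3⟩ := isClosed_and_discrete_iff.mpr h1
  have h3' := isDiscrete_iff_discreteTopology.mp h3
  have h4 : Countable ({z : ℂ | AnalyticAt ℂ f z}ᶜ : Set ℂ) :=
    TopologicalSpace.separableSpace_iff_countable.mp inferInstance
  exact Set.countable_coe_iff.mp h4

/-- If `c ≠ 0` and `f` is meromorphic on ℂ, non-constant, and satisfies the functional
equation `f(x)·f(y) = f(x+y)·(f(x) + f(y) + c)` (at points of analyticity), then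
`f(z) = c/(exp(λz) − 1)` for some nonzero constant `λ`. -/
theorem trigonometric_solution_of_functional_equation
    (c : ℂ) (hc : c ≠ 0)
    (f : ℂ → ℂ) (hf : MeromorphicOn f Set.univ)
    (hnc : ∃ x y : ℂ, AnalyticAt ℂ f x ∧ AnalyticAt ℂ f y ∧ f x ≠ f y)
    (heq : ∀ x y : ℂ, AnalyticAt ℂ f x → AnalyticAt ℂ f y → AnalyticAt ℂ f (x + y) →
      f x * f y = f (x + y) * (f x + f y + c)) :
    ∃ l : ℂ, l ≠ 0 ∧ ∀ z : ℂ, AnalyticAt ℂ f z → Complex.exp (l * z) ≠ 1 →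
      f z = c / (Complex.exp (l * z) - 1) := by
  classical
  obtain ⟨x₀, y₀, hx₀, hy₀, hfne⟩ := hnc
  set U : Set ℂ := {z | AnalyticAt ℂ f z} with hUdef
  have hUo : IsOpen U := isOpen_analyticAt ℂ f
  have hEc : Uᶜ.Countable := aux_countable hf
  have hUpre : IsPreconnected U := by
    have := aux_preconn hEc; rwa [compl_compl] at this
  have hx₀U : x₀ ∈ U := hx₀
  have hy₀U : y₀ ∈ U := hy₀
  -- f cannot be locally constant anywhere on U
  have key : ∀ (v : ℂ) (z₁ : ℂ), z₁ ∈ U → (∀ᶠ z in 𝓝 z₁, f z = v) → False := by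
    intro v z₁ hz₁ hev
    have hEq : Set.EqOn f (fun _ => v) U :=
      AnalyticOnNhd.eqOn_of_preconnected_of_eventuallyEq
        (fun z hz => hz) (fun z _ => analyticAt_const) hUpre hz₁ hev
    exact hfne (by rw [hEq hx₀U, hEq hy₀U])
  -- countability of translated bad sets
  have hshift : ∀ a : ℂ, {y : ℂ | ¬ (a + y) ∈ U}.Countable := by
    intro a
    have hsub : {y : ℂ | ¬ (a + y) ∈ U} ⊆ (fun z => z - a) '' Uᶜ := fun y hy =>
      ⟨a + y, hy, by ring⟩
    exact (hEc.image _).mono hsub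
  have hsubC : ∀ b : ℂ, {y : ℂ | ¬ (b - y) ∈ U}.Countable := by
    intro b
    have hsub : {y : ℂ | ¬ (b - y) ∈ U} ⊆ (fun z => b - z) '' Uᶜ := fun y hy =>
      ⟨b - y, hy, by ring⟩
    exact (hEc.image _).mono hsub
  -- a good companion point for any a
  have hcomp : ∀ a : ℂ, ∃ y : ℂ, y ∈ U ∧ a + y ∈ U := by
    intro a
    obtain ⟨y, hy⟩ := aux_compl_nonempty (hEc.union (hshift a))
    simp only [Set.mem_compl_iff, Set.mem_union, Set.mem_setOf_eq, not_or, not_not] at hy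
    exact ⟨y, hy.1, hy.2⟩
  -- translation of eventual statements
  have hmap : ∀ (a y₁ : ℂ) (P : ℂ → Prop), (∀ᶠ y in 𝓝 y₁, P (a + y)) →
      (∀ᶠ z in 𝓝 (a + y₁), P z) := by
    intro a y₁ P h
    have hm : Filter.map (fun y => a + y) (𝓝 y₁) = 𝓝 (a + y₁) :=
      (Homeomorph.addLeft a).map_nhds_eq y₁
    rw [← hm, eventually_map]
    exact h
  -- nonvanishing of f on U
  have NZ : ∀ a ∈ U, f a ≠ 0 := by
    intro a ha h0
    by_cases hcase : ∀ y : ℂ, y ∈ U → a + y ∈ U → f y + c = 0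
    · obtain ⟨y₁, hy₁U, hay₁⟩ := hcomp a
      apply key (-c) y₁ hy₁U
      filter_upwards [hUo.eventually_mem hy₁U,
        (hUo.preimage (continuous_const.add continuous_id)).eventually_mem
          (show y₁ ∈ (fun y => a + y) ⁻¹' U from hay₁)] with y h1 h2
      have := hcase y h1 h2
      linear_combination this
    · push_neg at hcase
      obtain ⟨y₂, hy₂U, hay₂, hfy₂⟩ := hcase
      apply key 0 (a + y₂) hay₂
      apply hmap a y₂ (fun z => f z = 0)
      filter_upwards [hUo.eventually_mem hy₂U,
        (hUo.preimage (continuous_const.add continuous_id)).eventually_mem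
          (show y₂ ∈ (fun y => a + y) ⁻¹' U from hay₂),
        ((hy₂U : AnalyticAt ℂ f y₂).continuousAt.eventually_ne
          (show f y₂ ≠ -c by intro h; apply hfy₂; rw [h]; ring))] with y h1 h2 h3
      have hE := heq a y ha h1 h2
      rw [h0, zero_mul] at hE
      have hyc : f y + c ≠ 0 := by
        intro h; exact h3 (by linear_combination h)
      rw [zero_add] at hE
      rcases mul_eq_zero.mp hE.symm with h | h
      · exact h
      · exact absurd h hyc
  -- f + c never vanishes on U
  have NC : ∀ a ∈ U, f a + c ≠ 0 := by
    intro a ha hac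
    obtain ⟨y₁, hy₁U, hay₁⟩ := hcomp a
    apply key (-c) (a + y₁) hay₁
    apply hmap a y₁ (fun z => f z = -c)
    filter_upwards [hUo.eventually_mem hy₁U,
      (hUo.preimage (continuous_const.add continuous_id)).eventually_mem
        (show y₁ ∈ (fun y => a + y) ⁻¹' U from hay₁)] with y h1 h2
    have hE := heq a y ha h1 h2
    have hfy : f y ≠ 0 := NZ y h1
    have hfa : f a = -c := by linear_combination hac
    -- f a * f y = f (a+y) * (f a + f y + c) and f a + c = 0
    have : (f (a + y) - f a) * f y = 0 := by linear_combination -hE - f (a + y) * hac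
    rcases mul_eq_zero.mp this with h | h
    · rw [← hfa]; linear_combination h
    · exact absurd h hfy
  -- the multiplicative function g
  set g : ℂ → ℂ := fun z => (f z + c) / f z with hgdef
  have hgan : ∀ z ∈ U, AnalyticAt ℂ g z := fun z hz =>
    ((hz : AnalyticAt ℂ f z).add analyticAt_const).div hz (NZ z hz)
  have hgne : ∀ z ∈ U, g z ≠ 0 := fun z hz => div_ne_zero (NC z hz) (NZ z hz)
  have hgmul : ∀ x y : ℂ, x ∈ U → y ∈ U → x + y ∈ U → g (x + y) = g x * g y := by
    intro x y hx hy hxy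
    have h := heq x y hx hy hxy
    have h1 := NZ x hx; have h2 := NZ y hy; have h3 := NZ _ hxy
    rw [hgdef]
    field_simp
    ring_nf
    linear_combination c * h
  -- derivative relation
  have hgd : ∀ x y : ℂ, x ∈ U → y ∈ U → x + y ∈ U → deriv g (x + y) = g x * deriv g y := by
    intro x y hx hy hxy
    have hev : (fun w => g (x + w)) =ᶠ[𝓝 y] fun w => g x * g w := by
      filter_upwards [hUo.eventually_mem hy,
        (hUo.preimage (continuous_const.add continuous_id)).eventually_mem
          (show y ∈ (fun w => x + w) ⁻¹' U from hxy)] with w hw1 hw2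
      exact hgmul x w hx hw1 hw2
    have e1 : deriv (fun w => g (x + w)) y = deriv g (x + y) := deriv_comp_const_add g x y
    have e2 : deriv (fun w => g x * g w) y = g x * deriv g y :=
      deriv_const_mul _ ((hgan y hy).differentiableAt)
    rw [← e1, hev.deriv_eq, e2]
  -- logarithmic derivative is constant
  set l : ℂ := deriv g x₀ / g x₀ with hldef
  have hconst : ∀ p ∈ U, deriv g p / g p = l := by
    intro p hp
    obtain ⟨y, hy⟩ := aux_compl_nonempty ((hEc.union (hsubC p)).union (hsubC x₀))
    simp only [Set.mem_compl_iff, Set.mem_union, Set.mem_setOf_eq, not_or, not_not] at hy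
    obtain ⟨⟨hyU, hpy⟩, hxy⟩ := hy
    have quot : ∀ q : ℂ, q ∈ U → q - y ∈ U → deriv g q / g q = deriv g y / g y := by
      intro q hq hqy
      have hsum : q - y + y = q := by ring
      have hd : deriv g q = g (q - y) * deriv g y := by
        have := hgd (q - y) y hqy hyU (by rwa [hsum])
        rwa [hsum] at this
      have hv : g q = g (q - y) * g y := by
        have := hgmul (q - y) y hqy hyU (by rwa [hsum])
        rwa [hsum] at this
      rw [hd, hv, mul_div_mul_left _ _ (hgne _ hqy)]
    rw [hldef, quot p hp hpy, quot x₀ hx₀U hxy]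
  have hderiv : ∀ p ∈ U, deriv g p = l * g p := by
    intro p hp
    exact (div_eq_iff (hgne p hp)).mp (hconst p hp)
  -- the function g z * exp (-l z) is locally constant on U
  set φ : ℂ → ℂ := fun z => g z * Complex.exp (-l * z) with hφdef
  have hφd : ∀ z ∈ U, HasDerivAt φ 0 z := by
    intro z hz
    have h1 : HasDerivAt g (l * g z) z := by
      have := (hgan z hz).differentiableAt.hasDerivAt
      rwa [hderiv z hz] at this
    have h2 : HasDerivAt (fun w => Complex.exp (-l * w)) (Complex.exp (-l * z) * -l) z := by
      simpa using ((hasDerivAt_id z).const_mul (-l)).cexp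
    have h3 := h1.mul h2
    have h4 : HasDerivAt φ (l * g z * Complex.exp (-l * z) + g z * (Complex.exp (-l * z) * -l)) z := h3
    convert h4 using 1
    ring
  have hφan : AnalyticOnNhd ℂ φ U := fun z hz =>
    (hgan z hz).mul (analyticAt_cexp.comp (analyticAt_const.mul analyticAt_id))
  have hφconst : Set.EqOn φ (fun _ => φ x₀) U := by
    apply AnalyticOnNhd.eqOn_of_preconnected_of_eventuallyEq hφan
      (fun z _ => analyticAt_const) hUpre hx₀U
    obtain ⟨ε, hε, hball⟩ := Metric.isOpen_iff.mp hUo x₀ hx₀U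
    filter_upwards [Metric.ball_mem_nhds x₀ hε] with z hz
    refine (convex_ball x₀ ε).is_const_of_fderivWithin_eq_zero (𝕜 := ℂ)
      (fun w hw => ((hφd w (hball hw)).differentiableAt).differentiableWithinAt)
      (fun w hw => ?_) hz (Metric.mem_ball_self hε)
    rw [fderivWithin_of_isOpen Metric.isOpen_ball hw]
    have h0 : HasFDerivAt φ (0 : ℂ →L[ℂ] ℂ) w := by
      have := (hφd w (hball hw)).hasFDerivAt
      rw [ContinuousLinearMap.toSpanSingleton_zero] at this
      exact this
    exact h0.fderiv
  set K : ℂ := φ x₀ with hKdef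
  have hgform : ∀ z ∈ U, g z = K * Complex.exp (l * z) := by
    intro z hz
    have h1 : g z * Complex.exp (-l * z) = K := hφconst hz
    have h2 : Complex.exp (-l * z) * Complex.exp (l * z) = 1 := by
      rw [← Complex.exp_add]; ring_nf; exact Complex.exp_zero
    calc g z = g z * (Complex.exp (-l * z) * Complex.exp (l * z)) := by rw [h2, mul_one]
    _ = g z * Complex.exp (-l * z) * Complex.exp (l * z) := by ring
    _ = K * Complex.exp (l * z) := by rw [h1]
  have hKne : K ≠ 0 := by
    rw [hKdef, hφdef]
    exact mul_ne_zero (hgne x₀ hx₀U) (Complex.exp_ne_zero _)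
  have hK1 : K = 1 := by
    obtain ⟨y, hyU, hxy⟩ := hcomp x₀
    have h := hgmul x₀ y hx₀U hyU hxy
    rw [hgform _ hxy, hgform _ hx₀U, hgform _ hyU] at h
    have hexp : Complex.exp (l * x₀) * Complex.exp (l * y) = Complex.exp (l * (x₀ + y)) := by
      rw [← Complex.exp_add]; ring_nf
    have h2 : K * Complex.exp (l * (x₀ + y)) = K * K * Complex.exp (l * (x₀ + y)) := by
      rw [h, ← hexp]; ring
    have h3 := mul_right_cancel₀ (Complex.exp_ne_zero (l * (x₀ + y))) h2
    have h4 : K * 1 = K * K := by rw [mul_one]; exact h3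
    exact (mul_left_cancel₀ hKne h4).symm
  have hlne : l ≠ 0 := by
    intro h0
    have hg1 : g x₀ = 1 := by
      rw [hgform x₀ hx₀U, h0, zero_mul, Complex.exp_zero, hK1, mul_one]
    rw [hgdef] at hg1
    have := (div_eq_one_iff_eq (NZ x₀ hx₀U)).mp hg1
    exact hc (by linear_combination this)
  refine ⟨l, hlne, ?_⟩
  intro z hz hexp1
  have hzU : z ∈ U := hz
  have hgz : g z = Complex.exp (l * z) := by rw [hgform z hzU, hK1, one_mul]
  rw [hgdef] at hgz
  rw [div_eq_iff (NZ z hzU)] at hgz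
  rw [eq_div_iff (sub_ne_zero.mpr hexp1)]
  linear_combination -hgz
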